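/- Let T > 0, let V : ℝⁿ × ℝ → ℝ be continuously differentiable, let ℓ, s : ℝⁿ → ℝ, and let α : ℝ → ℝ be extended class-K and locally Lipschitz. Assume the terminal condition V(y, 0) = min(ℓ(y), s(y)) for all y ∈ ℝⁿ, and the obstacle bound V(y, τ) ≤ s(y) for all y ∈ ℝⁿ and all τ ∈ [−T, 0]. Let x : [0, T] → ℝⁿ be a differentiable curve such that V(x(0), −T) ≥ 0 and, for all t ∈ [0, T], (d/dt)[V(x(t), t − T)] ≥ −α(V(x(t), t − T)). Then V(x(t), t − T) ≥ 0 for all t ∈ [0, T]; consequently s(x(t)) ≥ 0 for all t ∈ [0, T] (the trajectory never enters the obstacle set O = {y : s(y) < 0}), and ℓ(x(T)) ≥ 0 (the trajectory is in the target set {y : ℓ(y) ≥ 0} at time T). -/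

import Mathlib

/-- An extended class-K function: continuous, strictly increasing, vanishing at `0`. -/
def IsClassKe (α : ℝ → ℝ) : Prop :=
  Continuous α ∧ StrictMono α ∧ α 0 = 0

/-- Reach-avoid core of the proof of Proposition 2: if the Hamilton–Jacobi reach-avoid
value function `V` satisfies the terminal condition `V(y,0) = min(ℓ(y), s(y))` and the
obstacle bound `V(y,τ) ≤ s(y)`, then a barrier-type decrease condition on
`t ↦ V(x(t), t − T)` with nonnegative initial value forces the value to stay nonnegative,
hence the trajectory avoids the obstacle `{s < 0}` and is in the target `{ℓ ≥ 0}` at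
time `T`. -/
theorem reach_avoid_core {n : ℕ}
    (T : ℝ) (hT : 0 < T)
    (V : EuclideanSpace ℝ (Fin n) × ℝ → ℝ) (hV : ContDiff ℝ 1 V)
    (ℓ s : EuclideanSpace ℝ (Fin n) → ℝ)
    (α : ℝ → ℝ) (hα : IsClassKe α) (hαlip : LocallyLipschitz α)
    (hterm : ∀ y : EuclideanSpace ℝ (Fin n), V (y, 0) = min (ℓ y) (s y))
    (hobs : ∀ y : EuclideanSpace ℝ (Fin n), ∀ τ ∈ Set.Icc (-T) 0, V (y, τ) ≤ s y)
    (x : ℝ → EuclideanSpace ℝ (Fin n))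
    (hx : ∀ t ∈ Set.Icc 0 T, DifferentiableAt ℝ x t)
    (h0 : 0 ≤ V (x 0, -T))
    (hineq : ∀ t ∈ Set.Icc 0 T,
      deriv (fun u => V (x u, u - T)) t ≥ -α (V (x t, t - T))) :
    (∀ t ∈ Set.Icc 0 T, 0 ≤ V (x t, t - T)) ∧
    (∀ t ∈ Set.Icc 0 T, 0 ≤ s (x t)) ∧
    0 ≤ ℓ (x T) := by
  obtain ⟨hαc, hαm, hα0⟩ := hα
  set W : ℝ → ℝ := fun u => V (x u, u - T) with hWdef
  have hWval : ∀ t : ℝ, W t = V (x t, t - T) := fun t => rfl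
  have hWdiff : ∀ t ∈ Set.Icc (0:ℝ) T, DifferentiableAt ℝ W t := by
    intro t ht
    exact ((hV.differentiable one_ne_zero).differentiableAt).comp t
      ((hx t ht).prodMk (differentiableAt_id.sub_const T))
  have hWcont : ContinuousOn W (Set.Icc 0 T) :=
    fun t ht => (hWdiff t ht).continuousAt.continuousWithinAt
  have key : ∀ t ∈ Set.Icc (0:ℝ) T, 0 ≤ W t := by
    by_contra h
    push_neg at h
    obtain ⟨t₁, ht₁, ht₁neg⟩ := h
    have hW0 : 0 ≤ W 0 := by simpa [hWval, zero_sub] using h0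
    set S := Set.Icc 0 t₁ ∩ W ⁻¹' Set.Ici 0 with hSdef
    have hSne : S.Nonempty := ⟨0, ⟨le_rfl, ht₁.1⟩, hW0⟩
    have hSbdd : BddAbove S := ⟨t₁, fun y hy => hy.1.2⟩
    have hSclosed : IsClosed S := by
      apply (hWcont.mono (Set.Icc_subset_Icc le_rfl ht₁.2)).preimage_isClosed_of_isClosed
        isClosed_Icc isClosed_Ici
    have ht₀S : sSup S ∈ S := hSclosed.csSup_mem hSne hSbdd
    set t₀ := sSup S with ht₀def
    have ht₀le : t₀ ≤ t₁ := ht₀S.1.2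
    have ht₀lt : t₀ < t₁ := by
      rcases lt_or_eq_of_le ht₀le with h' | h'
      · exact h'
      · exfalso; have := ht₀S.2; rw [h'] at this; exact absurd this (not_le.mpr ht₁neg)
    have hneg : ∀ t ∈ Set.Ioc t₀ t₁, W t < 0 := by
      intro t ht
      by_contra hc
      push_neg at hc
      have : t ∈ S := ⟨⟨ht₀S.1.1.trans ht.1.le, ht.2⟩, hc⟩
      exact absurd (le_csSup hSbdd this) (not_le.mpr ht.1)
    have hsub : Set.Icc t₀ t₁ ⊆ Set.Icc 0 T :=
      Set.Icc_subset_Icc ht₀S.1.1 ht₁.2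
    have hmono : StrictMonoOn W (Set.Icc t₀ t₁) := by
      apply strictMonoOn_of_deriv_pos (convex_Icc _ _) (hWcont.mono hsub)
      intro t ht
      rw [interior_Icc] at ht
      have htIcc : t ∈ Set.Icc 0 T := hsub ⟨ht.1.le, ht.2.le⟩
      have hWt : W t < 0 := hneg t ⟨ht.1, ht.2.le⟩
      have hαneg : α (W t) < 0 := by
        have := hαm hWt; rwa [hα0] at this
      have hder := hineq t htIcc
      rw [← hWval t] at hder
      calc (0:ℝ) < -α (W t) := by linarith
        _ ≤ deriv W t := hder
    have := hmono (Set.left_mem_Icc.mpr ht₀le) (Set.right_mem_Icc.mpr ht₀le) ht₀lt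
    have := ht₀S.2
    simp only [Set.mem_preimage, Set.mem_Ici] at this
    linarith
  refine ⟨fun t ht => by simpa [hWval] using key t ht, fun t ht => ?_, ?_⟩
  · have h1 := key t ht
    have h2 := hobs (x t) (t - T) ⟨by linarith [ht.1], by linarith [ht.2]⟩
    rw [← hWval t] at h2
    linarith
  · have h1 := key T ⟨le_of_lt hT, le_rfl⟩
    rw [hWval, sub_self, hterm] at h1
    exact le_trans h1 (min_le_left _ _)
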